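/- Linearizability is compositional: if H is a complete history on O1 × O2 and, for i ∈ {1,2}, the restriction H|Oi is linearizable with respect to type τi, then H is linearizable with respect to τ1 × τ2. -/

import Mathlib

private lemma foldr_max_le {L : List ℕ} {c : ℕ} (h : ∀ x ∈ L, x ≤ c) :
    L.foldr max 0 ≤ c := by
  induction L with
  | nil => simp
  | cons a t ih =>
    simp only [List.foldr_cons, Nat.max_le]
    exact ⟨h a (by simp), ih fun x hx => h x (by simp [hx])⟩

private lemma le_foldr_max {L : List ℕ} {x : ℕ} (h : x ∈ L) :
    x ≤ L.foldr max 0 := by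
  induction L with
  | nil => simp at h
  | cons a t ih =>
    simp only [List.foldr_cons]
    rcases List.mem_cons.1 h with rfl | hx
    · exact le_max_left _ _
    · exact le_trans (ih hx) (le_max_right _ _)

private lemma indexOf_lt_of_mem_take {α : Type*} [DecidableEq α] {a : α} :
    ∀ {l : List α} {n : ℕ}, a ∈ l.take n → l.idxOf a < n := by
  intro l
  induction l with
  | nil => intro n h; simp at h
  | cons b t ih =>
    intro n h
    cases n with
    | zero => simp at h
    | succ m =>
      rw [List.take_succ_cons] at h
      rcases List.mem_cons.1 h with rfl | hx
      · simp [List.idxOf_cons_self]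
      · by_cases hab : a = b
        · subst hab; simp [List.idxOf_cons_self]
        · rw [List.idxOf_cons_ne _ (Ne.symm hab)]
          exact Nat.succ_lt_succ (ih hx)

private lemma mem_take_indexOf {α : Type*} [DecidableEq α] {a : α} {l : List α}
    (h : a ∈ l) : a ∈ l.take (l.idxOf a + 1) := by
  have hlt : l.idxOf a < l.length := List.idxOf_lt_length_iff.2 h
  have hlen : l.idxOf a < (l.take (l.idxOf a + 1)).length := by
    simp [List.length_take]; omega
  have : (l.take (l.idxOf a + 1))[l.idxOf a] = a := by
    rw [List.getElem_take]; exact List.getElem_idxOf hlt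
  have hm := List.getElem_mem hlen
  rwa [this] at hm

/-- Compositionality of linearizability. Operations are modeled by a finite
type `Op`; each operation has an invocation time `inv`, a response time `res`
(the history is complete), a process `proc`, and belongs to one of two objects
(`obj o : Bool`). Legality of a sequential history of the composed type
`τ₁ × τ₂` acts componentwise: it is given by a legality predicate
`legal i` on the subsequence of operations of object `i`. A linearization of a
set of operations is a duplicate-free list containing exactly these
operations, respecting the real-time order, and legal. -/
theorem linearizability_compositional
    (Op : Type) [Fintype Op] [DecidableEq Op]
    (inv res : Op → ℕ) (proc : Op → ℕ) (obj : Op → Bool)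
    (legal : Bool → List Op → Prop)
    (hwf : ∀ o, inv o < res o)
    (h : ∀ i : Bool, ∃ S : List Op, S.Nodup ∧
      (∀ o, o ∈ S ↔ obj o = i) ∧
      (∀ a b, a ∈ S → b ∈ S → res a < inv b → S.idxOf a < S.idxOf b) ∧
      legal i S) :
    ∃ S : List Op, S.Nodup ∧
      (∀ o : Op, o ∈ S) ∧
      (∀ a b, a ∈ S → b ∈ S → res a < inv b → S.idxOf a < S.idxOf b) ∧
      legal false (S.filter (fun o => obj o = false)) ∧
      legal true (S.filter (fun o => obj o = true)) := by
  classical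
  choose S hnd hmem hrt hleg using h
  set N : ℕ := Fintype.card Op + 1 with hNdef
  have homem : ∀ o : Op, o ∈ S (obj o) := fun o => (hmem _ o).2 rfl
  have hidx_lt : ∀ o : Op, (S (obj o)).idxOf o < N := by
    intro o
    have h1 : (S (obj o)).idxOf o < (S (obj o)).length :=
      List.idxOf_lt_length_iff.2 (homem o)
    have h2 := (hnd (obj o)).length_le_card
    omega
  set M : Op → ℕ := fun o =>
    (((S (obj o)).take ((S (obj o)).idxOf o + 1)).map inv).foldr max 0 with hMdef
  have hMinv : ∀ o, inv o ≤ M o := by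
    intro o
    exact le_foldr_max (List.mem_map_of_mem (f := inv) (mem_take_indexOf (homem o)))
  have hMres : ∀ o, M o ≤ res o := by
    intro o
    apply foldr_max_le
    intro x hx
    rcases List.mem_map.1 hx with ⟨a, ha, rfl⟩
    have haS : a ∈ S (obj o) := List.take_subset _ _ ha
    have hidxa : (S (obj o)).idxOf a < (S (obj o)).idxOf o + 1 :=
      indexOf_lt_of_mem_take ha
    by_contra hcon
    push_neg at hcon
    have := hrt (obj o) o a (homem o) haS (by omega)
    omega
  have hMmono : ∀ a b, obj a = obj b →
      (S (obj b)).idxOf a ≤ (S (obj b)).idxOf b → M a ≤ M b := by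
    intro a b hob hle
    simp only [hMdef]
    rw [hob]
    apply foldr_max_le
    intro x hx
    apply le_foldr_max
    rcases List.mem_map.1 hx with ⟨c, hc, rfl⟩
    apply List.mem_map_of_mem
    have hsub : (S (obj b)).take ((S (obj b)).idxOf a + 1) ⊆
        (S (obj b)).take ((S (obj b)).idxOf b + 1) := by
      intro y hy
      have : y ∈ ((S (obj b)).take ((S (obj b)).idxOf b + 1)).take
          ((S (obj b)).idxOf a + 1) := by
        rw [List.take_take]
        rwa [min_eq_left (by omega)]
      exact List.take_subset _ _ this
    exact hsub hc
  set K : Op → ℕ := fun o =>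
    2 * (N * M o + (S (obj o)).idxOf o) + (obj o).toNat with hKdef
  have hbit : ∀ b : Bool, b.toNat ≤ 1 := by decide
  have hK1 : ∀ a b, obj a = obj b →
      (S (obj b)).idxOf a < (S (obj b)).idxOf b → K a < K b := by
    intro a b hob hlt
    have hM : M a ≤ M b := hMmono a b hob (le_of_lt hlt)
    have hNM : N * M a ≤ N * M b := Nat.mul_le_mul_left _ hM
    simp only [hKdef, hob]
    omega
  have hK5 : ∀ a b, res a < inv b → K a < K b := by
    intro a b hab
    have h1 : N * M a ≤ N * res a := Nat.mul_le_mul_left _ (hMres a)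
    have h2 : N * inv b ≤ N * M b := Nat.mul_le_mul_left _ (hMinv b)
    have h3 : N * (res a + 1) ≤ N * inv b := Nat.mul_le_mul_left _ (by omega)
    have h4 : N * (res a + 1) = N * res a + N := by ring
    have h5 := hidx_lt a
    have h6 := hbit (obj a)
    simp only [hKdef]
    omega
  have hKinj : Function.Injective K := by
    intro a b hab
    have hob : obj a = obj b := by
      by_contra hcon
      cases ha : obj a <;> cases hb : obj b <;>
        simp [hKdef, ha, hb] at hab hcon <;> omega
    by_contra hne
    rcases lt_trichotomy ((S (obj b)).idxOf a) ((S (obj b)).idxOf b)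
      with hlt | heq | hgt
    · have := hK1 a b hob hlt; omega
    · exact hne ((List.idxOf_inj (hob ▸ homem a)).1 heq)
    · have hgt' : (S (obj a)).idxOf b < (S (obj a)).idxOf a := by
        rw [← hob] at hgt; exact hgt
      have := hK1 b a hob.symm hgt'; omega
  set r : Op → Op → Prop := fun a b => K a ≤ K b with hrdef
  haveI : DecidableRel r := fun a b => inferInstanceAs (Decidable (K a ≤ K b))
  haveI : IsTotal Op r := ⟨fun a b => le_total _ _⟩
  haveI : IsTrans Op r := ⟨fun _ _ _ => le_trans⟩
  haveI : IsAntisymm Op r := ⟨fun a b h1 h2 => hKinj (le_antisymm h1 h2)⟩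
  set L : List Op := List.insertionSort r Finset.univ.toList with hLdef
  have hLperm : L.Perm Finset.univ.toList := List.perm_insertionSort r _
  have hLnd : L.Nodup := hLperm.nodup_iff.2 (Finset.nodup_toList _)
  have hLmem : ∀ o : Op, o ∈ L := fun o =>
    hLperm.mem_iff.2 (Finset.mem_toList.2 (Finset.mem_univ o))
  have hLsorted : L.Pairwise r := List.pairwise_insertionSort r _
  have hidxK : ∀ a b, K a < K b → L.idxOf a < L.idxOf b := by
    intro a b hKab
    have hal : L.idxOf a < L.length := List.idxOf_lt_length_iff.2 (hLmem a)
    have hbl : L.idxOf b < L.length := List.idxOf_lt_length_iff.2 (hLmem b)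
    by_contra hcon
    push_neg at hcon
    rcases eq_or_lt_of_le hcon with he | hl
    · have : b = a := (List.idxOf_inj (hLmem b)).1 he
      subst this
      omega
    · have := hLsorted.rel_get_of_lt
        (a := ⟨L.idxOf b, hbl⟩) (b := ⟨L.idxOf a, hal⟩) hl
      simp only [List.get_eq_getElem, List.getElem_idxOf] at this
      exact absurd this (by simp only [hrdef]; omega)
  have hSsorted : ∀ i : Bool, (S i).Pairwise r := by
    intro i
    rw [List.pairwise_iff_getElem]
    intro p q hp hq hpq
    have hmp : (S i)[p] ∈ S i := List.getElem_mem hp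
    have hmq : (S i)[q] ∈ S i := List.getElem_mem hq
    have hop : obj ((S i)[p]) = i := (hmem i _).1 hmp
    have hoq : obj ((S i)[q]) = i := (hmem i _).1 hmq
    have hip : (S i).idxOf (S i)[p] = p := by
      have e1 : (S i).idxOf (S i)[p] < (S i).length :=
        List.idxOf_lt_length_iff.2 hmp
      exact ((hnd i).getElem_inj_iff).1 (List.getElem_idxOf e1)
    have hiq : (S i).idxOf (S i)[q] = q := by
      have e1 : (S i).idxOf (S i)[q] < (S i).length :=
        List.idxOf_lt_length_iff.2 hmq
      exact ((hnd i).getElem_inj_iff).1 (List.getElem_idxOf e1)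
    have := hK1 ((S i)[p]) ((S i)[q]) (hop.trans hoq.symm)
      (by rw [hoq, hip, hiq]; exact hpq)
    exact le_of_lt this
  have hfil : ∀ i : Bool, L.filter (fun o => obj o = i) = S i := by
    intro i
    have hperm : (L.filter (fun o => obj o = i)).Perm (S i) := by
      rw [List.perm_ext_iff_of_nodup (hLnd.filter _) (hnd i)]
      intro o
      simp [List.mem_filter, hLmem, hmem]
    have hs1 : (L.filter (fun o => obj o = i)).Pairwise r := hLsorted.filter _
    exact List.Perm.eq_of_pairwise' hs1 (hSsorted i) hperm
  refine ⟨L, hLnd, hLmem, ?_, ?_, ?_⟩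
  · intro a b _ _ hab
    exact hidxK a b (hK5 a b hab)
  · rw [hfil false]; exact hleg false
  · rw [hfil true]; exact hleg true
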